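/- For fixed n and v ∈ ℝ, if (z_N) is a sequence with (z_N - N p_N)/√(N p_N (1-p_N)) → v and p_N → p ∈ (0,1), then lim_{N→∞} (n! h_n)^{1/2} Q_n(z_N; N, p_N) = (-1)^n H_n(v), where h_n = C(N,n)(p_N/q_N)^n and H_n is the n-th probabilists' Hermite polynomial. -/

import Mathlib

open Finset Filter Polynomial

private lemma aux_pow_pred (A : Polynomial ℝ) (x : ℕ) :
    C (x:ℝ) * A ^ (x-1) * A = C (x:ℝ) * A ^ x := by
  cases x with
  | zero => simp
  | succ k => rw [Nat.add_sub_cancel, mul_assoc, ← pow_succ]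

private lemma aux_deriv_identity (c : ℝ) (x m : ℕ) :
    derivative ((1 - C c * X) ^ x * (1 + X) ^ m) * ((1 - C c * X) * (1 + X))
      = ((1 - C c * X) ^ x * (1 + X) ^ m)
        * (C (-(c * x)) * (1 + X) + C (m:ℝ) * (1 - C c * X)) := by
  have hd1 : derivative (1 - C c * X : Polynomial ℝ) = - C c := by simp
  have hd2 : derivative (1 + X : Polynomial ℝ) = 1 := by simp
  have h1 := aux_pow_pred (1 - C c * X) x
  have h2 := aux_pow_pred (1 + X) m
  rw [derivative_mul, derivative_pow, derivative_pow, hd1, hd2]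
  simp only [map_neg, map_mul]
  linear_combination (-(C c) * (1 + X:Polynomial ℝ)^m * (1+X)) * h1
    + ((1 - C c * X:Polynomial ℝ)^x * (1 - C c * X)) * h2

private lemma aux_coeff_rec (c : ℝ) (x m k : ℕ) :
    ((k:ℝ)+2) * (((1 - C c * X)^x * (1+X)^m : Polynomial ℝ).coeff (k+2))
      = ((m:ℝ) - c*x - (1-c)*((k:ℝ)+1)) * (((1 - C c * X)^x * (1+X)^m : Polynomial ℝ).coeff (k+1))
        + c * ((k:ℝ) - ((x:ℝ)+(m:ℝ))) * (((1 - C c * X)^x * (1+X)^m : Polynomial ℝ).coeff k) := by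
  set P : Polynomial ℝ := (1 - C c * X)^x * (1+X)^m with hP
  have hid := aux_deriv_identity c x m
  have hL : derivative P * ((1 - C c * X) * (1 + X))
      = derivative P + C (1-c) * (X * derivative P) - C c * (X^2 * derivative P) := by
    simp only [map_sub, map_one]; ring
  have hR : P * (C (-(c * (x:ℝ))) * (1 + X) + C (m:ℝ) * (1 - C c * X))
      = C ((m:ℝ) - c*x) * P - C (c*((x:ℝ)+m)) * (X * P) := by
    simp only [map_sub, map_add, map_mul, map_neg, map_one]; ring
  rw [hL, hR] at hid
  have hX2 : ((X^2 * derivative P).coeff (k+1)) = (k:ℝ) * P.coeff k := by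
    cases k with
    | zero => simp [sq, mul_assoc, coeff_X_mul, mul_coeff_zero]
    | succ j =>
      have e : j + 1 + 1 = j + 2 := rfl
      rw [e, coeff_X_pow_mul, coeff_derivative]
      push_cast; ring
  have h := congrArg (fun q : Polynomial ℝ => q.coeff (k+1)) hid
  simp only [coeff_add, coeff_sub, coeff_C_mul, coeff_X_mul, coeff_derivative] at h
  rw [hX2] at h
  push_cast at h ⊢
  linarith [h]

private lemma aux_coeff_link (c : ℝ) (N x : ℕ) (b : ℕ → ℝ)
    (h : ∀ s : ℝ, ∑ k ∈ Finset.range (N+1), b k * s ^ k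
        = (1 - c * s) ^ x * (1 + s) ^ (N - x)) (j : ℕ) (hj : j ≤ N) :
    b j = ((1 - C c * X)^x * (1+X)^(N-x) : Polynomial ℝ).coeff j := by
  have hS : (∑ k ∈ Finset.range (N+1), C (b k) * X^k : Polynomial ℝ)
      = (1 - C c * X)^x * (1+X)^(N-x) := by
    apply Polynomial.funext
    intro s
    have := h s
    simp only [eval_finset_sum, eval_mul, eval_pow, eval_C, eval_X, eval_add, eval_sub, eval_one]
    exact this
  have h2 := congrArg (fun P : Polynomial ℝ => P.coeff j) hS
  simp only [finset_sum_coeff, coeff_C_mul, coeff_X_pow, mul_ite, mul_one, mul_zero] at h2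
  rw [Finset.sum_ite_eq (Finset.range (N+1)) j b] at h2
  simpa [Nat.lt_succ_iff, hj] using h2

private lemma aux_coeff_one (c : ℝ) (x m : ℕ) :
    ((1 - C c * X)^x * (1+X)^m : Polynomial ℝ).coeff 1 = (m:ℝ) - c * x := by
  have h : ((1 - C c * X)^x * (1+X)^m : Polynomial ℝ).coeff 1
      = (derivative ((1 - C c * X)^x * (1+X)^m : Polynomial ℝ)).coeff 0 := by
    rw [coeff_derivative]; ring
  rw [h, coeff_zero_eq_eval_zero, derivative_mul, derivative_pow, derivative_pow]
  simp
  ring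

private lemma aux_hermite_deriv (n : ℕ) :
    derivative (hermite n) = C (n:ℤ) * hermite (n-1) := by
  induction n using Nat.twoStepInduction with
  | zero => simp
  | one => simp [hermite_one]
  | more n ih1 ih2 =>
    simp only [Nat.add_sub_cancel] at ih2 ⊢
    rw [hermite_succ (n+1), derivative_sub, derivative_mul, derivative_X, ih2,
      derivative_mul, derivative_C]
    have h := hermite_succ n
    push_cast
    simp only [map_add, map_one, map_ofNat]
    linear_combination (-(C ((n:ℤ)) + 1)) * h

private lemma aux_hermite_eval (v : ℝ) (k : ℕ) :
    (aeval v (hermite (k+2)) : ℝ) = v * aeval v (hermite (k+1)) - ((k:ℝ)+1) * aeval v (hermite k) := by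
  rw [hermite_succ, aux_hermite_deriv, Nat.add_sub_cancel]
  simp only [map_sub, map_mul, aeval_X, aeval_C]
  push_cast
  ring

private lemma aux_tendsto_sub_atTop (a : ℝ) :
    Tendsto (fun N : ℕ => (N:ℝ) - a) atTop atTop := by
  have h : Tendsto (fun N : ℕ => (N:ℝ)) atTop atTop := tendsto_natCast_atTop_atTop
  have := tendsto_atTop_add_const_right atTop (-a) h
  simpa [sub_eq_add_neg] using this

private lemma aux_tendsto_inv (a : ℝ) :
    Tendsto (fun N : ℕ => ((N:ℝ) - a)⁻¹) atTop (nhds 0) :=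
  (aux_tendsto_sub_atTop a).inv_tendsto_atTop

private lemma aux_tendsto_ratio (a b : ℝ) :
    Tendsto (fun N : ℕ => ((N:ℝ) - a)/((N:ℝ) - b)) atTop (nhds 1) := by
  have h1 : Tendsto (fun N : ℕ => 1 + (b - a) * ((N:ℝ) - b)⁻¹) atTop (nhds 1) := by
    have := (aux_tendsto_inv b).const_mul (b - a)
    have h2 := (tendsto_const_nhds (x := (1:ℝ)) (f := atTop (α := ℕ))).add this
    simpa using h2
  apply h1.congr'
  filter_upwards [((aux_tendsto_sub_atTop b).eventually_gt_atTop 0)] with N hN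
  have : (N:ℝ) - b ≠ 0 := ne_of_gt hN
  field_simp
  ring

private lemma aux_tendsto_sqrt_ratio (a b : ℝ) :
    Tendsto (fun N : ℕ => Real.sqrt (((N:ℝ) - a)/((N:ℝ) - b))) atTop (nhds 1) := by
  have := (Real.continuous_sqrt.tendsto 1).comp (aux_tendsto_ratio a b)
  simpa [Function.comp_def] using this

private lemma aux_sqrt_mul_right (a b : ℝ) (hb : 0 ≤ b) :
    Real.sqrt a * b = Real.sqrt (a * b^2) := by
  rw [Real.sqrt_mul' a (sq_nonneg b), Real.sqrt_sq hb]

set_option maxHeartbeats 1600000 in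
theorem stmt_13 (p : ℝ) (hp : 0 < p) (hp1 : p < 1)
    (pN : ℕ → ℝ) (hpN : ∀ N, 0 < pN N ∧ pN N < 1)
    (hpNp : Filter.Tendsto pN Filter.atTop (nhds p))
    (Q : (N : ℕ) → ℕ → ℕ → ℝ)
    (hQ : ∀ N : ℕ, ∀ x ≤ N, ∀ s : ℝ,
      ∑ k ∈ Finset.range (N + 1), (N.choose k : ℝ) * Q N k x * s ^ k
        = (1 - ((1 - pN N) / pN N) * s) ^ x * (1 + s) ^ (N - x))
    (z : ℕ → ℕ) (hz : ∀ N, z N ≤ N) (v : ℝ)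
    (hconv : Filter.Tendsto
      (fun N : ℕ => ((z N : ℝ) - N * pN N) / Real.sqrt (N * pN N * (1 - pN N)))
      Filter.atTop (nhds v))
    (n : ℕ) :
    Filter.Tendsto
      (fun N : ℕ =>
        Real.sqrt ((n.factorial : ℝ) * (N.choose n : ℝ) * (pN N / (1 - pN N)) ^ n)
          * Q N n (z N))
      Filter.atTop
      (nhds ((-1) ^ n * (Polynomial.aeval v (Polynomial.hermite n) : ℝ))) := by
  have hp0 : ∀ N, 0 < pN N := fun N => (hpN N).1
  have hq0 : ∀ N, 0 < 1 - pN N := fun N => by linarith [(hpN N).2]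
  have hb : ∀ N : ℕ, ∀ j ≤ N, (N.choose j : ℝ) * Q N j (z N)
      = ((1 - C ((1 - pN N)/pN N) * X)^(z N) * (1+X)^(N - z N) : Polynomial ℝ).coeff j :=
    fun N j hj => aux_coeff_link ((1 - pN N)/pN N) N (z N)
      (fun k => (N.choose k : ℝ) * Q N k (z N)) (hQ N (z N) (hz N)) j hj
  have hQ0 : ∀ N, Q N 0 (z N) = 1 := by
    intro N
    have h := hb N 0 (Nat.zero_le N)
    rw [coeff_zero_eq_eval_zero] at h
    simpa using h
  have hQ1 : ∀ N, 1 ≤ N → (N.choose 1 : ℝ) * Q N 1 (z N)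
      = ((N - z N : ℕ):ℝ) - ((1 - pN N)/pN N) * z N :=
    fun N hN => (hb N 1 hN).trans (aux_coeff_one _ _ _)
  have hrec : ∀ (k : ℕ) (N : ℕ), k + 2 ≤ N →
      ((k:ℝ)+2) * ((N.choose (k+2) : ℝ) * Q N (k+2) (z N))
        = (((N - z N : ℕ):ℝ) - ((1-pN N)/pN N)*(z N) - (1-(1-pN N)/pN N)*((k:ℝ)+1))
            * ((N.choose (k+1):ℝ) * Q N (k+1) (z N))
          + ((1-pN N)/pN N) * ((k:ℝ) - ((z N:ℝ)+((N - z N:ℕ):ℝ)))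
            * ((N.choose k:ℝ) * Q N k (z N)) := by
    intro k N hkN
    rw [hb N (k+2) hkN, hb N (k+1) (by omega), hb N k (by omega)]
    exact aux_coeff_rec _ _ _ _
  induction n using Nat.twoStepInduction with
  | zero =>
    have he : ∀ N : ℕ, Real.sqrt ((Nat.factorial 0 : ℝ) * (N.choose 0 : ℝ)
        * (pN N / (1 - pN N)) ^ 0) * Q N 0 (z N) = 1 := by
      intro N; simp [hQ0 N]
    rw [show ((-1:ℝ))^0 * (aeval v (hermite 0) : ℝ) = 1 by simp]
    exact Tendsto.congr (fun N => (he N).symm) tendsto_const_nhds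
  | one =>
    rw [show ((-1:ℝ))^1 * (aeval v (hermite 1) : ℝ) = -v by simp [hermite_one]]
    apply hconv.neg.congr'
    filter_upwards [eventually_ge_atTop 1] with N hN
    have hxle := hz N
    have hcast : ((N - z N : ℕ):ℝ) = (N:ℝ) - (z N:ℝ) := by
      push_cast [Nat.cast_sub hxle]; ring
    have hQ1' := hQ1 N hN
    rw [Nat.choose_one_right, hcast] at hQ1'
    have hNpos : (0:ℝ) < N := by exact_mod_cast hN
    have hP0 := hp0 N; have hQq0 := hq0 N
    have hQval : Q N 1 (z N) = ((N:ℝ) - (z N:ℝ) - ((1-pN N)/pN N) * z N)/N := by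
      rw [eq_div_iff (ne_of_gt hNpos), mul_comm]
      exact hQ1'
    rw [Nat.choose_one_right, hQval]
    have h1 : Real.sqrt ((Nat.factorial 1 : ℝ) * (N:ℝ) * (pN N/(1-pN N))^1)
        = Real.sqrt (N:ℝ) * (Real.sqrt (pN N) / Real.sqrt (1 - pN N)) := by
      rw [show ((Nat.factorial 1 : ℝ) * (N:ℝ) * (pN N/(1-pN N))^1)
          = (N:ℝ) * (pN N/(1-pN N)) by simp [Nat.factorial_one]]
      rw [Real.sqrt_mul (Nat.cast_nonneg N), Real.sqrt_div hP0.le]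
    have h2 : Real.sqrt ((N:ℝ) * pN N * (1 - pN N))
        = Real.sqrt (N:ℝ) * Real.sqrt (pN N) * Real.sqrt (1-pN N) := by
      rw [Real.sqrt_mul (mul_nonneg (Nat.cast_nonneg N) hP0.le), Real.sqrt_mul (Nat.cast_nonneg N)]
    rw [h1, h2]
    have hsp2 : Real.sqrt (pN N) ^ 2 = pN N := Real.sq_sqrt hP0.le
    have hsq2 : Real.sqrt (1-pN N) ^ 2 = 1-pN N := Real.sq_sqrt hQq0.le
    have hsN2 : Real.sqrt (N:ℝ) ^ 2 = (N:ℝ) := Real.sq_sqrt (Nat.cast_nonneg N)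
    have hsp0 : (0:ℝ) < Real.sqrt (pN N) := Real.sqrt_pos.2 hP0
    have hsq0 : (0:ℝ) < Real.sqrt (1-pN N) := Real.sqrt_pos.2 hQq0
    have hsN0 : (0:ℝ) < Real.sqrt (N:ℝ) := Real.sqrt_pos.2 hNpos
    generalize Real.sqrt (pN N) = sp at hsp2 hsp0
    generalize Real.sqrt (1-pN N) = sq' at hsq2 hsq0
    generalize Real.sqrt (N:ℝ) = sN at hsN2 hsN0
    have hpq : sq' ^ 2 = 1 - sp ^ 2 := by rw [hsq2, hsp2]
    rw [← hsq2, ← hsp2, ← hsN2]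
    field_simp
    linear_combination (((z N):ℝ)) * hpq
  | more k ih1 ih2 =>
    -- notation
    have hq1 : (0:ℝ) < 1 - p := by linarith
    set A : ℕ → ℝ := fun N =>
      ((N:ℝ) - (z N:ℝ) - ((1-pN N)/pN N)*(z N:ℝ) - (1-(1-pN N)/pN N)*((k:ℝ)+1))
        * Real.sqrt ((pN N/(1-pN N))/((N:ℝ)-((k:ℝ)+1))) with hAdef
    set B : ℕ → ℝ := fun N =>
      -((k:ℝ)+1) * Real.sqrt (((N:ℝ)-(k:ℝ))/((N:ℝ)-((k:ℝ)+1))) with hBdef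
    -- limit of B
    have hB : Tendsto B atTop (nhds (-((k:ℝ)+1))) := by
      have := (aux_tendsto_sqrt_ratio (k:ℝ) ((k:ℝ)+1)).const_mul (-((k:ℝ)+1))
      simpa [hBdef] using this
    -- limit of r_N
    have hr : Tendsto (fun N => pN N/(1-pN N)) atTop (nhds (p/(1-p))) :=
      hpNp.div (tendsto_const_nhds.sub hpNp) (ne_of_gt hq1)
    have hsqrt0 : Tendsto (fun N => Real.sqrt ((pN N/(1-pN N))/((N:ℝ)-((k:ℝ)+1))))
        atTop (nhds 0) := by
      have hinner : Tendsto (fun N : ℕ => (pN N/(1-pN N)) * ((N:ℝ)-((k:ℝ)+1))⁻¹)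
          atTop (nhds (p/(1-p) * 0)) := hr.mul (aux_tendsto_inv ((k:ℝ)+1))
      rw [mul_zero] at hinner
      have := (Real.continuous_sqrt.tendsto 0).comp hinner
      simpa [Function.comp_def, div_eq_mul_inv] using this
    have hcN : Tendsto (fun N => 1 - (1-pN N)/pN N) atTop (nhds (1 - (1-p)/p)) :=
      tendsto_const_nhds.sub ((tendsto_const_nhds.sub hpNp).div hpNp (ne_of_gt hp))
    -- limit of A
    have hA : Tendsto A atTop (nhds (-v)) := by
      have hA1 : Tendsto (fun N : ℕ =>
          -(((z N:ℝ) - (N:ℝ) * pN N) / Real.sqrt ((N:ℝ) * pN N * (1 - pN N)))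
            * Real.sqrt (((N:ℝ)-(0:ℝ))/((N:ℝ)-((k:ℝ)+1)))) atTop (nhds (-v * 1)) :=
        hconv.neg.mul (aux_tendsto_sqrt_ratio 0 ((k:ℝ)+1))
      have hA2 : Tendsto (fun N : ℕ =>
          (1-(1-pN N)/pN N) * ((k:ℝ)+1)
            * Real.sqrt ((pN N/(1-pN N))/((N:ℝ)-((k:ℝ)+1)))) atTop
          (nhds ((1 - (1-p)/p) * ((k:ℝ)+1) * 0)) :=
        (hcN.mul tendsto_const_nhds).mul hsqrt0
      have hcomb := hA1.sub hA2
      rw [show -v * 1 - (1 - (1-p)/p) * ((k:ℝ)+1) * 0 = -v by ring] at hcomb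
      apply hcomb.congr'
      filter_upwards [eventually_ge_atTop (k+2)] with N hN
      have hxle := hz N
      have hNk : ((k:ℝ)+2) ≤ (N:ℝ) := by exact_mod_cast hN
      have hdpos : (0:ℝ) < (N:ℝ) - ((k:ℝ)+1) := by linarith
      have hNpos : (0:ℝ) < (N:ℝ) := by linarith
      have hP0 := hp0 N; have hQq0 := hq0 N
      -- identity
      have e1 : Real.sqrt ((pN N/(1-pN N))/((N:ℝ)-((k:ℝ)+1)))
          = (Real.sqrt (pN N) / Real.sqrt (1-pN N)) / Real.sqrt ((N:ℝ)-((k:ℝ)+1)) := by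
        rw [Real.sqrt_div (div_nonneg hP0.le hQq0.le), Real.sqrt_div hP0.le]
      have e2 : Real.sqrt (((N:ℝ)-(0:ℝ))/((N:ℝ)-((k:ℝ)+1)))
          = Real.sqrt (N:ℝ) / Real.sqrt ((N:ℝ)-((k:ℝ)+1)) := by
        rw [sub_zero, Real.sqrt_div (Nat.cast_nonneg N)]
      have e3 : Real.sqrt ((N:ℝ) * pN N * (1 - pN N))
          = Real.sqrt (N:ℝ) * Real.sqrt (pN N) * Real.sqrt (1-pN N) := by
        rw [Real.sqrt_mul (by positivity), Real.sqrt_mul (Nat.cast_nonneg N)]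
      simp only [hAdef]
      rw [e1, e2, e3]
      have hsp2 : Real.sqrt (pN N) ^ 2 = pN N := Real.sq_sqrt hP0.le
      have hsq2 : Real.sqrt (1-pN N) ^ 2 = 1-pN N := Real.sq_sqrt hQq0.le
      have hsN2 : Real.sqrt (N:ℝ) ^ 2 = (N:ℝ) := Real.sq_sqrt (Nat.cast_nonneg N)
      have hsd2 : Real.sqrt ((N:ℝ)-((k:ℝ)+1)) ^ 2 = (N:ℝ)-((k:ℝ)+1) := Real.sq_sqrt hdpos.le
      have hsp0 : (0:ℝ) < Real.sqrt (pN N) := Real.sqrt_pos.2 hP0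
      have hsq0 : (0:ℝ) < Real.sqrt (1-pN N) := Real.sqrt_pos.2 hQq0
      have hsN0 : (0:ℝ) < Real.sqrt (N:ℝ) := Real.sqrt_pos.2 hNpos
      have hsd0 : (0:ℝ) < Real.sqrt ((N:ℝ)-((k:ℝ)+1)) := Real.sqrt_pos.2 hdpos
      generalize Real.sqrt (pN N) = sp at hsp2 hsp0
      generalize Real.sqrt (1-pN N) = sq' at hsq2 hsq0
      generalize Real.sqrt (N:ℝ) = sN at hsN2 hsN0
      generalize Real.sqrt ((N:ℝ)-((k:ℝ)+1)) = sd at hsd2 hsd0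
      have hpq : sq' ^ 2 = 1 - sp ^ 2 := by rw [hsq2, hsp2]
      rw [← hsq2, ← hsp2, ← hsN2]
      field_simp
      linear_combination (((z N):ℝ)) * hpq
    -- combine limits
    have hcomb := (hA.mul ih2).add (hB.mul ih1)
    have hval : -v * ((-1:ℝ)^(k+1) * (aeval v) (hermite (k+1)))
        + -((k:ℝ)+1) * ((-1:ℝ)^k * (aeval v) (hermite k))
        = (-1:ℝ)^(k+2) * (aeval v) (hermite (k+2)) := by
      rw [aux_hermite_eval v k]
      ring
    rw [hval] at hcomb
    apply hcomb.congr'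
    filter_upwards [eventually_ge_atTop (k+2)] with N hN
    have hxle := hz N
    have hkN : k + 2 ≤ N := hN
    have hP0 := hp0 N; have hQq0 := hq0 N
    have hNk : ((k:ℝ)+2) ≤ (N:ℝ) := by exact_mod_cast hN
    have hdpos : (0:ℝ) < (N:ℝ) - ((k:ℝ)+1) := by linarith
    have hd'pos : (0:ℝ) < (N:ℝ) - (k:ℝ) := by linarith
    have hC2pos : (0:ℝ) < (N.choose (k+2) : ℝ) := by
      exact_mod_cast Nat.choose_pos hkN
    have hC1pos : (0:ℝ) < (N.choose (k+1) : ℝ) := by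
      exact_mod_cast Nat.choose_pos (show k+1 ≤ N by omega)
    have hC0pos : (0:ℝ) < (N.choose k : ℝ) := by
      exact_mod_cast Nat.choose_pos (show k ≤ N by omega)
    have hrr0 : (0:ℝ) < pN N/(1-pN N) := div_pos hP0 hQq0
    have hcc0 : (0:ℝ) < (1-pN N)/pN N := div_pos hQq0 hP0
    have hrc : (pN N/(1-pN N)) * ((1-pN N)/pN N) = 1 := by
      field_simp
    have hcast : ((N - z N : ℕ):ℝ) = (N:ℝ) - (z N:ℝ) := by
      push_cast [Nat.cast_sub hxle]; ring
    have hc2 : ((k:ℝ)+2) * (N.choose (k+2):ℝ) = ((N:ℝ)-((k:ℝ)+1)) * (N.choose (k+1):ℝ) := by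
      have h := congrArg (Nat.cast : ℕ → ℝ) (Nat.choose_succ_right_eq N (k+1))
      push_cast [Nat.cast_sub (show k+1 ≤ N by omega)] at h
      linarith
    have hc1 : ((k:ℝ)+1) * (N.choose (k+1):ℝ) = ((N:ℝ)-(k:ℝ)) * (N.choose k:ℝ) := by
      have h := congrArg (Nat.cast : ℕ → ℝ) (Nat.choose_succ_right_eq N k)
      push_cast [Nat.cast_sub (show k ≤ N by omega)] at h
      linarith
    have hf2 : (((k+2).factorial : ℕ):ℝ) = ((k:ℝ)+2)*((k:ℝ)+1)*((k.factorial:ℕ):ℝ) := by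
      push_cast [Nat.factorial_succ]
      ring
    have hf1 : (((k+1).factorial : ℕ):ℝ) = ((k:ℝ)+1)*((k.factorial:ℕ):ℝ) := by
      push_cast [Nat.factorial_succ]
      ring
    have hR := hrec k N hkN
    rw [hcast] at hR
    have hQ2 : Q N (k+2) (z N)
        = ((((N:ℝ) - (z N:ℝ) - ((1-pN N)/pN N)*(z N:ℝ) - (1-(1-pN N)/pN N)*((k:ℝ)+1))
              * ((N.choose (k+1):ℝ) * Q N (k+1) (z N))
            + ((1-pN N)/pN N) * ((k:ℝ) - ((z N:ℝ) + ((N:ℝ) - (z N:ℝ))))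
              * ((N.choose k:ℝ) * Q N k (z N))))
          / (((k:ℝ)+2) * (N.choose (k+2):ℝ)) := by
      rw [eq_div_iff (by positivity)]
      linear_combination hR
    have hf1nn : (0:ℝ) ≤ ((k+1).factorial : ℝ) * (N.choose (k+1) : ℝ) * (pN N/(1-pN N))^(k+1) :=
      mul_nonneg (mul_nonneg (Nat.cast_nonneg _) (Nat.cast_nonneg _)) (pow_nonneg hrr0.le _)
    have hf0nn : (0:ℝ) ≤ (k.factorial : ℝ) * (N.choose k : ℝ) * (pN N/(1-pN N))^k :=
      mul_nonneg (mul_nonneg (Nat.cast_nonneg _) (Nat.cast_nonneg _)) (pow_nonneg hrr0.le _)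
    have K1 : Real.sqrt (((k+2).factorial : ℝ) * (N.choose (k+2) : ℝ) * (pN N/(1-pN N))^(k+2))
          * ((N.choose (k+1):ℝ) / (((k:ℝ)+2) * (N.choose (k+2):ℝ)))
        = Real.sqrt ((pN N/(1-pN N))/((N:ℝ)-((k:ℝ)+1)))
          * Real.sqrt (((k+1).factorial : ℝ) * (N.choose (k+1) : ℝ) * (pN N/(1-pN N))^(k+1)) := by
      rw [aux_sqrt_mul_right _ _ (by positivity),
        ← Real.sqrt_mul (div_nonneg hrr0.le hdpos.le)]
      congr 1
      have hsub : (N.choose (k+2):ℝ) = ((N:ℝ)-((k:ℝ)+1)) * (N.choose (k+1):ℝ)/((k:ℝ)+2) := by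
        rw [eq_div_iff (by positivity)]
        linarith [hc2]
      rw [hf2, hf1, hsub]
      field_simp [ne_of_gt hQq0, ne_of_gt hP0]
      have hinv : (1 - pN N)⁻¹ * (1 - pN N) = 1 := inv_mul_cancel₀ (ne_of_gt hQq0)
      linear_combination (pN N^2 * pN N^k * (1 - pN N)⁻¹ * ((1 - pN N)⁻¹)^k) * hinv
    have K2 : Real.sqrt (((k+2).factorial : ℝ) * (N.choose (k+2) : ℝ) * (pN N/(1-pN N))^(k+2))
          * (((N.choose k:ℝ) * (((1-pN N)/pN N) * ((N:ℝ)-(k:ℝ)))) / (((k:ℝ)+2) * (N.choose (k+2):ℝ)))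
        = (((k:ℝ)+1) * Real.sqrt (((N:ℝ)-(k:ℝ))/((N:ℝ)-((k:ℝ)+1))))
          * Real.sqrt ((k.factorial : ℝ) * (N.choose k : ℝ) * (pN N/(1-pN N))^k) := by
      have hs2 : Real.sqrt ((((N:ℝ)-(k:ℝ))/((N:ℝ)-((k:ℝ)+1)))
            * ((k.factorial : ℝ) * (N.choose k : ℝ) * (pN N/(1-pN N))^k) * (((k:ℝ)+1))^2)
          = (((k:ℝ)+1) * Real.sqrt (((N:ℝ)-(k:ℝ))/((N:ℝ)-((k:ℝ)+1))))
            * Real.sqrt ((k.factorial : ℝ) * (N.choose k : ℝ) * (pN N/(1-pN N))^k) := by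
        rw [Real.sqrt_mul (mul_nonneg (div_nonneg hd'pos.le hdpos.le) hf0nn),
          Real.sqrt_mul (div_nonneg hd'pos.le hdpos.le),
          Real.sqrt_sq (by positivity)]
        ring
      rw [aux_sqrt_mul_right _ _ (by positivity), ← hs2]
      congr 1
      have hsub : (N.choose (k+2):ℝ) = ((N:ℝ)-((k:ℝ)+1)) * (N.choose (k+1):ℝ)/((k:ℝ)+2) := by
        rw [eq_div_iff (by positivity)]
        linarith [hc2]
      have hsub1 : (N.choose (k+1):ℝ) = ((N:ℝ)-(k:ℝ)) * (N.choose k:ℝ)/((k:ℝ)+1) := by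
        rw [eq_div_iff (by positivity)]
        linarith [hc1]
      rw [hf2, hsub, hsub1]
      field_simp [ne_of_gt hQq0, ne_of_gt hP0]
      have hinv : (1 - pN N)⁻¹ * (1 - pN N) = 1 := inv_mul_cancel₀ (ne_of_gt hQq0)
      linear_combination (pN N^2 * pN N^k * ((1 - pN N)⁻¹)^k * ((1 - pN N)⁻¹ * (1 - pN N) + 1)) * hinv
    simp only [hAdef, hBdef]
    rw [hQ2]
    linear_combination (-(((N:ℝ) - (z N:ℝ) - ((1-pN N)/pN N)*(z N:ℝ)
        - (1-(1-pN N)/pN N)*((k:ℝ)+1)) * Q N (k+1) (z N))) * K1 + (Q N k (z N)) * K2
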